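/- Let a = {a_k} satisfy 1 = a_0 > a_1 ≥ a_2 ≥ ... ≥ 0 with a_k → 0 and ∑_{k=0}^∞ a_k = ∞. Let b = {b_k} be the first column of the inverse of the lower triangular Toeplitz matrix generated by a, i.e., b_0 = 1 and ∑_{j=0}^{k} a_j b_{k-j} = 0 for k ≥ 1. Then lim_{k→∞} b_k = 0. -/

import Mathlib

open Finset Filter

theorem stmt_5 (a b : ℕ → ℝ) (ha0 : a 0 = 1) (ha1 : a 1 < 1)
    (hapos : ∀ k, 0 ≤ a k)
    (hamono : ∀ k, 1 ≤ k → a k ≤ a (k - 1))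
    (halim : Tendsto a atTop (nhds 0))
    (hadiv : ¬ Summable a)
    (hb0 : b 0 = 1)
    (hconv : ∀ k, 1 ≤ k → ∑ j ∈ Finset.range (k + 1), a j * b (k - j) = 0) :
    Tendsto b atTop (nhds 0) := by
  -- partial sums of b
  set u : ℕ → ℝ := fun k => ∑ j ∈ Finset.range (k + 1), b j with hu
  have hu0 : u 0 = 1 := by simp [hu, hb0]
  have husucc : ∀ n, u (n + 1) = u n + b (n + 1) := by
    intro n
    simp [hu, Finset.sum_range_succ]
  -- a is antitone and ≤ 1
  have hanti : Antitone a := by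
    apply antitone_nat_of_succ_le
    intro n
    simpa using hamono (n + 1) (by omega)
  have hale1 : ∀ k, a k ≤ 1 := fun k => ha0 ▸ hanti (Nat.zero_le k)
  -- Key identity A : ∑_{j ≤ k} a j * u (k - j) = 1
  have hA : ∀ k, ∑ j ∈ Finset.range (k + 1), a j * u (k - j) = 1 := by
    intro k
    induction k with
    | zero => simp [ha0, hu0]
    | succ k ih =>
      have h1 : ∑ j ∈ Finset.range (k + 2), a j * u (k + 1 - j)
          = (∑ j ∈ Finset.range (k + 1), a j * u (k + 1 - j)) + a (k + 1) * u 0 := by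
        rw [Finset.sum_range_succ]
        simp
      have h2 : ∀ j ∈ Finset.range (k + 1), a j * u (k + 1 - j)
          = a j * u (k - j) + a j * b (k + 1 - j) := by
        intro j hj
        rw [Finset.mem_range] at hj
        have e1 : k + 1 - j = (k - j) + 1 := by omega
        rw [e1, husucc, ← e1, mul_add]
      have h3 : ∑ j ∈ Finset.range (k + 1), a j * b (k + 1 - j)
          = -(a (k + 1)) := by
        have hc := hconv (k + 1) (by omega)
        rw [Finset.sum_range_succ] at hc
        simp only [Nat.sub_self, hb0, mul_one] at hc
        linarith
      rw [h1, Finset.sum_congr rfl h2, Finset.sum_add_distrib, ih, h3, hu0]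
      ring
  -- recursion: u k = ∑_{j < k} (a j - a (j+1)) * u (k - 1 - j), for k ≥ 1
  have hB : ∀ k, 1 ≤ k → u k = ∑ j ∈ Finset.range k, (a j - a (j + 1)) * u (k - 1 - j) := by
    intro k hk
    have h1 := hA k
    have h2 := hA (k - 1)
    rw [Finset.sum_range_succ'] at h1
    have hk1 : k - 1 + 1 = k := by omega
    rw [hk1] at h2
    have h3 : ∀ j ∈ Finset.range k, a (j + 1) * u (k - (j + 1)) = a (j + 1) * u (k - 1 - j) := by
      intro j hj; congr 2; omega
    have h4 : ∀ j ∈ Finset.range k, a j * u (k - 1 - j) - a (j + 1) * u (k - 1 - j)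
        = (a j - a (j + 1)) * u (k - 1 - j) := by intro j _; ring
    rw [Finset.sum_congr rfl h3] at h1
    simp only [Nat.sub_zero, ha0, one_mul] at h1
    calc u k = (∑ j ∈ Finset.range k, a j * u (k - 1 - j))
        - ∑ j ∈ Finset.range k, a (j + 1) * u (k - 1 - j) := by
          rw [h2]; linarith
    _ = ∑ j ∈ Finset.range k, (a j - a (j + 1)) * u (k - 1 - j) := by
          rw [← Finset.sum_sub_distrib, Finset.sum_congr rfl h4]
  have hcpos : ∀ j, 0 ≤ a j - a (j + 1) := fun j => sub_nonneg.2 (hanti (by omega))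
  -- bounds on u
  have hub : ∀ k, 0 ≤ u k ∧ u k ≤ 1 := by
    intro k
    induction k using Nat.strong_induction_on with
    | _ k ih =>
      rcases Nat.eq_zero_or_pos k with hk | hk
      · subst hk; rw [hu0]; norm_num
      · rw [hB k hk]
        constructor
        · apply Finset.sum_nonneg
          intro j hj
          exact mul_nonneg (hcpos j) (ih (k - 1 - j) (by omega)).1
        · calc ∑ j ∈ Finset.range k, (a j - a (j + 1)) * u (k - 1 - j)
              ≤ ∑ j ∈ Finset.range k, (a j - a (j + 1)) := by
                apply Finset.sum_le_sum
                intro j hj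
                rw [Finset.mem_range] at hj
                have := (ih (k - 1 - j) (by omega)).2
                nlinarith [hcpos j, (ih (k - 1 - j) (by omega)).1]
          _ = a 0 - a k := Finset.sum_range_sub' a k
          _ ≤ 1 := by rw [ha0]; linarith [hapos k]
  have hbdd : IsBoundedUnder (· ≤ ·) atTop u := isBoundedUnder_of ⟨1, fun k => (hub k).2⟩
  have hbdd' : IsBoundedUnder (· ≥ ·) atTop u := isBoundedUnder_of ⟨0, fun k => (hub k).1⟩
  have hcobdd : IsCoboundedUnder (· ≤ ·) atTop u := hbdd'.isCoboundedUnder_flip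
  set L : ℝ := limsup u atTop with hL
  have hL0 : 0 ≤ L := le_limsup_of_frequently_le
    (Frequently.of_forall fun k => (hub k).1) hbdd
  -- subsequence φ with u ∘ φ → L
  obtain ⟨φ, hφmono, hφ⟩ : ∃ φ : ℕ → ℕ, StrictMono φ ∧ ∀ n, L - 1 / (n + 1) < u (φ n) := by
    apply Filter.extraction_forall_of_frequently (P := fun n k => L - 1 / (n + 1) < u k)
    intro n
    apply frequently_lt_of_lt_limsup hcobdd
    rw [← hL]
    have : (0:ℝ) < 1 / (n + 1) := by positivity
    linarith
  have hφge : ∀ n, n ≤ φ n := fun n => hφmono.le_apply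
  have hφtend : Tendsto (u ∘ φ) atTop (nhds L) := by
    rw [Metric.tendsto_atTop]
    intro ε hε
    obtain ⟨N1, hN1⟩ := (Metric.tendsto_atTop.1 (show Tendsto (fun n : ℕ => 1 / ((n : ℝ) + 1)) atTop (nhds 0) from tendsto_one_div_add_atTop_nhds_zero_nat)) ε hε
    have hev := eventually_lt_of_limsup_lt (show limsup u atTop < L + ε by rw [← hL]; linarith) hbdd
    obtain ⟨N2, hN2⟩ := eventually_atTop.1 hev
    refine ⟨max N1 N2, fun n hn => ?_⟩
    have h1 : L - 1 / (n + 1) < u (φ n) := hφ n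
    have h2 : u (φ n) < L + ε := hN2 (φ n) (le_trans (le_trans (le_max_right _ _) hn) (hφge n))
    have h3 : dist (1 / ((n:ℝ) + 1)) 0 < ε := hN1 n (le_trans (le_max_left _ _) hn)
    rw [Real.dist_eq] at h3 ⊢
    have h4 : |1 / ((n:ℝ) + 1)| = 1 / ((n:ℝ) + 1) := abs_of_pos (by positivity)
    rw [sub_zero] at h3
    rw [h4] at h3
    rw [abs_lt]
    constructor <;> simp only [Function.comp_apply] <;> linarith
  -- telescoping over Ico
  have tele : ∀ m n : ℕ, m ≤ n → ∑ j ∈ Finset.Ico m n, (a j - a (j + 1)) = a m - a n := by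
    intro m n h
    rw [Finset.sum_Ico_eq_sub _ h, Finset.sum_range_sub' a, Finset.sum_range_sub' a]
    ring
  have c1pos : 0 < 1 - a 1 := by linarith
  have c1le : 1 - a 1 ≤ 1 := by linarith [hapos 1]
  -- key inductive claim: u (φ i - m) → L for every fixed m
  have key : ∀ m : ℕ, Tendsto (fun i => u (φ i - m)) atTop (nhds L) := by
    intro m
    induction m with
    | zero => simpa [Function.comp_def] using hφtend
    | succ m ihm =>
      rw [Metric.tendsto_atTop]
      intro ε hε
      set c1 : ℝ := 1 - a 1 with hc1
      set δ : ℝ := c1 * ε / 4 with hδ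
      have hδpos : 0 < δ := by positivity
      have hδε : δ ≤ ε := by
        rw [hδ]
        nlinarith
      obtain ⟨N1, hN1⟩ := eventually_atTop.1 (eventually_lt_of_limsup_lt
        (show limsup u atTop < L + δ by rw [← hL]; linarith) hbdd)
      obtain ⟨N2, hN2'⟩ := Metric.tendsto_atTop.1 halim δ hδpos
      have hN2 : ∀ k, N2 ≤ k → a k < δ := by
        intro k hk
        have := hN2' k hk
        rw [Real.dist_eq, sub_zero] at this
        exact lt_of_le_of_lt (le_abs_self _) this
      obtain ⟨N3, hN3⟩ := Metric.tendsto_atTop.1 ihm δ hδpos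
      refine ⟨N3 + N1 + N2 + m + 2, fun i hi => ?_⟩
      set k : ℕ := φ i - m with hk
      have hφi : N3 + N1 + N2 + m + 2 ≤ φ i := le_trans hi (hφge i)
      have hk2 : N1 + N2 + 2 ≤ k := by omega
      have hk0 : 0 < k := by omega
      have hkN1 : 1 ≤ k - N1 ∧ k - N1 ≤ k ∧ N2 ≤ k - N1 := by omega
      -- the recursion, with the first term peeled off
      have hrec : u k = (a 0 - a 1) * u (k - 1)
          + ∑ j ∈ Finset.Ico 1 k, (a j - a (j + 1)) * u (k - 1 - j) := by
        rw [hB k hk0, Finset.range_eq_Ico, Finset.sum_eq_sum_Ico_succ_bot hk0]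
        norm_num
      have hsplit : ∑ j ∈ Finset.Ico 1 k, (a j - a (j + 1)) * u (k - 1 - j)
          = (∑ j ∈ Finset.Ico 1 (k - N1), (a j - a (j + 1)) * u (k - 1 - j))
          + ∑ j ∈ Finset.Ico (k - N1) k, (a j - a (j + 1)) * u (k - 1 - j) :=
        (Finset.sum_Ico_consecutive _ hkN1.1 hkN1.2.1).symm
      have hS1 : ∑ j ∈ Finset.Ico 1 (k - N1), (a j - a (j + 1)) * u (k - 1 - j)
          ≤ (1 - c1) * (L + δ) := by
        calc ∑ j ∈ Finset.Ico 1 (k - N1), (a j - a (j + 1)) * u (k - 1 - j)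
            ≤ ∑ j ∈ Finset.Ico 1 (k - N1), (a j - a (j + 1)) * (L + δ) := by
              apply Finset.sum_le_sum
              intro j hj
              rw [Finset.mem_Ico] at hj
              have : N1 ≤ k - 1 - j := by omega
              exact mul_le_mul_of_nonneg_left (le_of_lt (hN1 _ this)) (hcpos j)
        _ = (a 1 - a (k - N1)) * (L + δ) := by
              rw [← Finset.sum_mul, tele 1 (k - N1) hkN1.1]
        _ ≤ (1 - c1) * (L + δ) := by
              have h1 : a 1 - a (k - N1) ≤ 1 - c1 := by
                rw [hc1]; linarith [hapos (k - N1)]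
              have h2 : (0:ℝ) ≤ L + δ := by linarith
              nlinarith
      have hS2 : ∑ j ∈ Finset.Ico (k - N1) k, (a j - a (j + 1)) * u (k - 1 - j) ≤ δ := by
        calc ∑ j ∈ Finset.Ico (k - N1) k, (a j - a (j + 1)) * u (k - 1 - j)
            ≤ ∑ j ∈ Finset.Ico (k - N1) k, (a j - a (j + 1)) := by
              apply Finset.sum_le_sum
              intro j hj
              nlinarith [hcpos j, (hub (k - 1 - j)).1, (hub (k - 1 - j)).2]
        _ = a (k - N1) - a k := tele _ _ hkN1.2.1
        _ ≤ a (k - N1) := by linarith [hapos k]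
        _ ≤ δ := le_of_lt (hN2 (k - N1) hkN1.2.2)
      -- lower bound on u k from ihm
      have hlow : L - δ < u k := by
        have := hN3 i (by omega)
        rw [Real.dist_eq, abs_lt] at this
        linarith [this.1]
      have ha01 : a 0 - a 1 = c1 := by rw [hc1, ha0]
      rw [ha01, hsplit] at hrec
      have hstep1 : c1 * u (k - 1) ≥ (L - δ) - ((1 - c1) * (L + δ) + δ) := by
        linarith [hS1, hS2, hlow, hrec]
      have hstep2 : (L - δ) - ((1 - c1) * (L + δ) + δ) = c1 * L + c1 * δ - 3 * δ := by ring
      have hδnn : 0 ≤ c1 * δ := mul_nonneg (le_of_lt c1pos) (le_of_lt hδpos)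
      have hc1uk1 : c1 * u (k - 1) ≥ c1 * L - 3 * δ := by
        rw [hstep2] at hstep1
        linarith
      have hlow2 : L - ε < u (k - 1) := by
        have h34 : c1 * L - 3 * δ = c1 * (L - 3 / 4 * ε) := by rw [hδ]; ring
        have h35 : c1 * (L - 3 / 4 * ε) ≤ c1 * u (k - 1) := by rw [← h34]; exact hc1uk1
        have h36 := (mul_le_mul_iff_right₀ c1pos).1 h35
        linarith
      have hhigh : u (k - 1) < L + ε := by
        have : N1 ≤ k - 1 := by omega
        linarith [hN1 _ this]
      have hkk : k - 1 = φ i - (m + 1) := by omega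
      rw [← hkk, Real.dist_eq, abs_lt]
      constructor <;> linarith
  -- Step F: (∑_{j ≤ m} a j) * L ≤ 1 for all m
  have hF : ∀ m : ℕ, (∑ j ∈ Finset.range (m + 1), a j) * L ≤ 1 := by
    intro m
    have htend : Tendsto (fun i => ∑ j ∈ Finset.range (m + 1), a j * u (φ i - j))
        atTop (nhds (∑ j ∈ Finset.range (m + 1), a j * L)) := by
      apply tendsto_finset_sum
      intro j _
      exact (key j).const_mul (a j)
    have hle : ∀ᶠ i in atTop, ∑ j ∈ Finset.range (m + 1), a j * u (φ i - j) ≤ 1 := by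
      filter_upwards [eventually_ge_atTop m] with i hi
      have hm : m + 1 ≤ φ i + 1 := by have := hφge i; omega
      calc ∑ j ∈ Finset.range (m + 1), a j * u (φ i - j)
          ≤ ∑ j ∈ Finset.range (φ i + 1), a j * u (φ i - j) := by
            apply Finset.sum_le_sum_of_subset_of_nonneg (Finset.range_subset_range.2 hm)
            intro j _ _
            exact mul_nonneg (hapos j) (hub _).1
      _ = 1 := hA (φ i)
    have := le_of_tendsto htend hle
    rwa [← Finset.sum_mul] at this
  -- partial sums of a diverge
  have hdiv : Tendsto (fun n => ∑ j ∈ Finset.range n, a j) atTop atTop :=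
    (not_summable_iff_tendsto_nat_atTop_of_nonneg hapos).1 hadiv
  -- hence L ≤ 0, so L = 0
  have hLle : L ≤ 0 := by
    by_contra h
    push_neg at h
    obtain ⟨n, hn⟩ := (tendsto_atTop.1 hdiv (2 / L)).exists
    have hn1 : (∑ j ∈ Finset.range (n + 1), a j) * L ≤ 1 := hF n
    have hmono : (∑ j ∈ Finset.range n, a j) ≤ ∑ j ∈ Finset.range (n + 1), a j := by
      rw [Finset.sum_range_succ]; linarith [hapos n]
    have : 2 / L * L ≤ 1 := by nlinarith
    rw [div_mul_cancel₀] at this <;> [skip; positivity]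
    linarith
  have hLeq : L = 0 := le_antisymm hLle hL0
  -- u → 0
  have hutend : Tendsto u atTop (nhds 0) := by
    apply tendsto_of_le_liminf_of_limsup_le _ _ hbdd hbdd'
    · exact le_liminf_of_le hbdd.isCoboundedUnder_flip (Eventually.of_forall fun k => (hub k).1)
    · rw [← hL, hLeq]
  -- b → 0
  have hb : ∀ᶠ k in atTop, b k = u k - u (k - 1) := by
    filter_upwards [eventually_ge_atTop 1] with k hk
    have h1 := husucc (k - 1)
    have h2 : k - 1 + 1 = k := by omega
    rw [h2] at h1
    linarith
  have : Tendsto (fun k => u k - u (k - 1)) atTop (nhds 0) := by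
    have h2 : Tendsto (fun k => u (k - 1)) atTop (nhds 0) :=
      hutend.comp (tendsto_sub_atTop_nat 1)
    simpa using hutend.sub h2
  exact Tendsto.congr' (hb.mono fun k hk => hk.symm) this
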